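/- Let G be a finite connected simple graph on at least 2 vertices. Then μ(G) + 1 ≤ ml(G), i.e. the minimum number of leaves of a spanning tree of G is at least one more than the path covering number of G. -/

import Mathlib

open SimpleGraph

/-- Number of leaves (degree-one vertices) of a graph. -/
noncomputable def leafCount {V : Type} (T : SimpleGraph V) : ℕ :=
  Set.ncard {v | (T.neighborSet v).ncard = 1}

/-- The minimum leaf number: the minimum number of leaves of a spanning tree. -/
noncomputable def ml {V : Type} (G : SimpleGraph V) : ℕ :=
  sInf {k | ∃ T : SimpleGraph V, T ≤ G ∧ T.IsTree ∧ leafCount T = k}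

/-- `S` is a vertex-disjoint path cover of `G`: each member is the vertex set of a
path of `G`, and the members partition the vertex set. -/
def IsPathCover {V : Type} (G : SimpleGraph V) (S : Finset (Set V)) : Prop :=
  (∀ A ∈ S, ∃ (u v : V) (p : G.Walk u v), p.IsPath ∧ {x | x ∈ p.support} = A) ∧
  (∀ x : V, ∃! A, A ∈ S ∧ x ∈ A)

/-- The path covering number. -/
noncomputable def pathCoverNumber {V : Type} (G : SimpleGraph V) : ℕ :=
  sInf {k | ∃ S : Finset (Set V), IsPathCover G S ∧ S.card = k}

section Aux

variable {V : Type}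

lemma internal_two_nbrs {G : SimpleGraph V} {a b : V} (p : G.Walk a b) (hp : p.IsPath)
    (x : V) (hx : x ∈ p.support) (hxa : x ≠ a) (hxb : x ≠ b) :
    ∃ y z, y ≠ z ∧ G.Adj x y ∧ G.Adj x z := by
  induction p with
  | nil =>
    rw [SimpleGraph.Walk.support_nil, List.mem_singleton] at hx
    exact absurd hx hxa
  | @cons a c b h q ih =>
    rw [SimpleGraph.Walk.support_cons, List.mem_cons] at hx
    rcases hx with rfl | hx
    · exact absurd rfl hxa
    rw [SimpleGraph.Walk.cons_isPath_iff] at hp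
    by_cases hxc : x = c
    · subst hxc
      cases q with
      | nil => exact absurd rfl hxb
      | @cons _ d _ h' q' =>
        refine ⟨a, d, ?_, h.symm, h'⟩
        rintro rfl
        exact hp.2 (by
          rw [SimpleGraph.Walk.support_cons]
          exact List.mem_cons_of_mem _ q'.start_mem_support)
    · exact ih hp.1 hx hxc hxb

lemma endpoint_of_ncard_one {G : SimpleGraph V} {a b x : V} (p : G.Walk a b) (hp : p.IsPath)
    (hx : x ∈ p.support) (hleaf : (G.neighborSet x).ncard = 1) : x = a ∨ x = b := by
  by_contra hcon
  push_neg at hcon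
  obtain ⟨y, z, hyz, hy, hz⟩ := internal_two_nbrs p hp x hx hcon.1 hcon.2
  obtain ⟨w, hw⟩ := Set.ncard_eq_one.mp hleaf
  have hy' : y ∈ G.neighborSet x := hy
  have hz' : z ∈ G.neighborSet x := hz
  rw [hw, Set.mem_singleton_iff] at hy' hz'
  exact hyz (hy'.trans hz'.symm)

lemma exists_tree_le [Fintype V] :
    ∀ (n : ℕ) (G : SimpleGraph V), G.edgeSet.ncard ≤ n → G.Connected →
      ∃ T ≤ G, T.IsTree := by
  intro n
  induction n with
  | zero =>
    intro G hn hconn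
    refine ⟨G, le_rfl, hconn, ?_⟩
    intro v c hc
    rcases c with _ | ⟨h', q⟩
    · exact hc.not_of_nil
    · have : s(v, _) ∈ G.edgeSet := h'
      have hpos : 0 < G.edgeSet.ncard :=
        (Set.ncard_pos (Set.toFinite _)).mpr ⟨_, this⟩
      omega
  | succ n ih =>
    intro G hn hconn
    by_cases hac : G.IsAcyclic
    · exact ⟨G, le_rfl, hconn, hac⟩
    rw [isAcyclic_iff_forall_adj_isBridge] at hac
    push_neg at hac
    obtain ⟨v, w, hadj, hbr⟩ := hac
    set G' : SimpleGraph V := G \ fromEdgeSet {s(v, w)} with hG'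
    have hreach : G'.Reachable v w := by
      rw [isBridge_iff] at hbr
      push_neg at hbr
      exact hbr
    have hle : G' ≤ G := sdiff_le
    have hkey : ∀ {a b : V}, G.Walk a b → G'.Reachable a b := by
      intro a b p
      induction p with
      | nil => exact Reachable.refl _
      | @cons a c b h q ih2 =>
        refine Reachable.trans ?_ ih2
        by_cases he : s(a, c) = s(v, w)
        · rw [Sym2.eq_iff] at he
          rcases he with ⟨rfl, rfl⟩ | ⟨rfl, rfl⟩
          · exact hreach
          · exact hreach.symm
        · refine Adj.reachable ?_
          rw [hG', sdiff_adj]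
          refine ⟨h, ?_⟩
          rw [fromEdgeSet_adj]
          rintro ⟨hmem, -⟩
          exact he (Set.mem_singleton_iff.mp hmem)
    have hconn' : G'.Connected := by
      haveI := hconn.nonempty
      refine ⟨fun a b => ?_⟩
      obtain ⟨p⟩ := hconn.preconnected a b
      exact hkey p
    have hssub : G'.edgeSet ⊂ G.edgeSet := by
      constructor
      · rw [hG', edgeSet_sdiff]
        exact Set.diff_subset
      · intro hsub
        have h1 : s(v, w) ∈ G'.edgeSet := hsub hadj
        rw [SimpleGraph.mem_edgeSet, hG', sdiff_adj] at h1
        exact h1.2 (by rw [fromEdgeSet_adj]; exact ⟨rfl, hadj.ne⟩)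
    have hlt : G'.edgeSet.ncard < G.edgeSet.ncard :=
      Set.ncard_lt_ncard hssub (Set.toFinite _)
    obtain ⟨T, hT, hT'⟩ := ih G' (by omega) hconn'
    exact ⟨T, hT.trans hle, hT'⟩

lemma ncard_neighborSet_eq_degree [Fintype V] (G : SimpleGraph V) [DecidableRel G.Adj] (v : V) :
    (G.neighborSet v).ncard = G.degree v := by
  rw [← card_neighborSet_eq_degree, ← Nat.card_coe_set_eq, Nat.card_eq_fintype_card]

lemma two_le_leafCount [Fintype V] (T : SimpleGraph V) (hT : T.IsTree)
    (h2 : 2 ≤ Fintype.card V) : 2 ≤ leafCount T := by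
  classical
  have hdeg : ∀ v : V, 1 ≤ T.degree v := by
    intro v
    obtain ⟨w, hw⟩ := Fintype.exists_ne_of_one_lt_card (by omega) v
    obtain ⟨p⟩ := hT.isConnected.preconnected v w
    cases p with
    | nil => exact absurd rfl hw
    | cons h q => exact (T.degree_pos_iff_exists_adj v).mpr ⟨_, h⟩
  have hsum := T.sum_degrees_eq_twice_card_edges
  have hedge := hT.card_edgeFinset
  have hcount : leafCount T =
      (Finset.univ.filter (fun v : V => T.degree v = 1)).card := by
    rw [leafCount]
    have : {v : V | (T.neighborSet v).ncard = 1} =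
        ↑(Finset.univ.filter (fun v : V => T.degree v = 1)) := by
      ext x
      simp [ncard_neighborSet_eq_degree]
    rw [this, Set.ncard_coe_finset]
  have hsplit := Finset.sum_filter_add_sum_filter_not Finset.univ
    (fun v : V => T.degree v = 1) (fun v => T.degree v)
  have h1 : ∑ x ∈ Finset.univ.filter (fun v : V => T.degree v = 1), T.degree x =
      (Finset.univ.filter (fun v : V => T.degree v = 1)).card := by
    rw [Finset.sum_congr rfl (fun v hv => (Finset.mem_filter.mp hv).2)]
    simp
  have h2' : 2 * (Finset.univ.filter (fun v : V => ¬ T.degree v = 1)).card ≤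
      ∑ x ∈ Finset.univ.filter (fun v : V => ¬ T.degree v = 1), T.degree x := by
    rw [two_mul]
    calc (Finset.univ.filter (fun v : V => ¬ T.degree v = 1)).card +
        (Finset.univ.filter (fun v : V => ¬ T.degree v = 1)).card
        = (Finset.univ.filter (fun v : V => ¬ T.degree v = 1)).card • 2 := by
          rw [smul_eq_mul]; ring
      _ ≤ _ := Finset.card_nsmul_le_sum _ _ _ (fun x hx => by
          have := hdeg x
          have hne := (Finset.mem_filter.mp hx).2
          omega)
  have hcards : (Finset.univ.filter (fun v : V => T.degree v = 1)).card +
      (Finset.univ.filter (fun v : V => ¬ T.degree v = 1)).card = Fintype.card V := by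
    simpa using Finset.card_filter_add_card_filter_not
      (s := (Finset.univ : Finset V)) (fun v : V => T.degree v = 1)
  rw [hcount]
  omega

end Aux

section DeleteLeaf

variable {V : Type}

/-- Inclusion homomorphism from the induced subgraph on `{x // x ≠ v}`. -/
def liftHom {T : SimpleGraph V} {v : V} :
    T.comap (Subtype.val : {x : V // x ≠ v} → V) →g T where
  toFun := Subtype.val
  map_rel' := fun h => h

lemma liftHom_coe {T : SimpleGraph V} {v : V} :
    ⇑(liftHom (T := T) (v := v)) = Subtype.val := rfl

lemma liftHom_inj {T : SimpleGraph V} {v : V} :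
    Function.Injective (liftHom (T := T) (v := v)) := by
  rw [liftHom_coe]; exact Subtype.val_injective

lemma delete_leaf_tree {T : SimpleGraph V} {v : V} (hT : T.IsTree)
    (hv : (T.neighborSet v).ncard = 1) :
    (T.comap (Subtype.val : {x : V // x ≠ v} → V)).IsTree := by
  obtain ⟨u, hu⟩ := Set.ncard_eq_one.mp hv
  have hadj : T.Adj v u := by
    have : u ∈ T.neighborSet v := by rw [hu]; exact rfl
    exact this
  have hune : u ≠ v := hadj.ne'
  constructor
  · -- connected
    haveI : Nonempty {x : V // x ≠ v} := ⟨⟨u, hune⟩⟩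
    refine ⟨fun a b => ?_⟩
    obtain ⟨p, hp, -⟩ := hT.existsUnique_path a.val b.val
    have hvp : v ∉ p.support := by
      intro hmem
      rcases endpoint_of_ncard_one p hp hmem hv with h | h
      · exact a.prop h.symm
      · exact b.prop h.symm
    have key : ∀ (x y : V) (q : T.Walk x y) (hx : x ≠ v) (hy : y ≠ v), v ∉ q.support →
        (T.comap (Subtype.val : {x : V // x ≠ v} → V)).Reachable ⟨x, hx⟩ ⟨y, hy⟩ := by
      intro x y q
      induction q with
      | nil => intro hx hy _; exact Reachable.refl _
      | @cons x c y h q ih =>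
        intro hx hy hns
        rw [SimpleGraph.Walk.support_cons, List.mem_cons] at hns
        push_neg at hns
        have hc : c ≠ v := by
          intro hcv
          exact hns.2 (hcv ▸ q.start_mem_support)
        have hadj' : (T.comap (Subtype.val : {x : V // x ≠ v} → V)).Adj ⟨x, hx⟩ ⟨c, hc⟩ := h
        exact Reachable.trans hadj'.reachable (ih hc hy hns.2)
    have := key a.val b.val p a.prop b.prop hvp
    simpa using this
  · -- acyclic
    intro x c hc
    exact hT.IsAcyclic _ (SimpleGraph.Walk.IsCycle.map liftHom_inj hc)

lemma image_neighborSet {T : SimpleGraph V} {v : V} (w : {x : V // x ≠ v}) :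
    Subtype.val '' ((T.comap (Subtype.val : {x : V // x ≠ v} → V)).neighborSet w)
      = T.neighborSet w.val \ {v} := by
  ext y
  constructor
  · rintro ⟨z, hz, rfl⟩
    exact ⟨hz, z.prop⟩
  · rintro ⟨hy, hyv⟩
    exact ⟨⟨y, hyv⟩, hy, rfl⟩

lemma leaf_transfer {T : SimpleGraph V} {v u : V} (hu : T.neighborSet v = {u})
    (w : {x : V // x ≠ v}) (hwu : w.val ≠ u)
    (hw' : ((T.comap (Subtype.val : {x : V // x ≠ v} → V)).neighborSet w).ncard = 1) :
    (T.neighborSet w.val).ncard = 1 := by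
  have himg := image_neighborSet (T := T) (v := v) w
  have hvnot : v ∉ T.neighborSet w.val := by
    intro hmem
    have : w.val ∈ T.neighborSet v := (by exact hmem : T.Adj w.val v).symm
    rw [hu, Set.mem_singleton_iff] at this
    exact hwu this
  rw [Set.diff_singleton_eq_self hvnot] at himg
  rw [← himg, Set.ncard_image_of_injective _ Subtype.val_injective]
  exact hw'

end DeleteLeaf

lemma cover_of_tree :
    ∀ (n : ℕ) {V : Type} [Fintype V] (T : SimpleGraph V),
      Fintype.card V ≤ n → T.IsTree →
      ∃ S : Finset (Set V), IsPathCover T S ∧ S.card + 1 ≤ max 2 (leafCount T) := by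
  intro n
  induction n with
  | zero =>
    intro V _ T hn hT
    haveI := hT.isConnected.nonempty
    have := Fintype.card_pos (α := V)
    omega
  | succ n ih =>
    intro V _ T hn hT
    classical
    haveI := hT.isConnected.nonempty
    have hpos := Fintype.card_pos (α := V)
    by_cases hc1 : Fintype.card V = 1
    · obtain ⟨v, hv⟩ := Fintype.card_eq_one_iff.mp hc1
      refine ⟨{({v} : Set V)}, ⟨?_, ?_⟩, ?_⟩
      · intro A hA
        rw [Finset.mem_singleton] at hA
        subst hA
        exact ⟨v, v, SimpleGraph.Walk.nil, SimpleGraph.Walk.IsPath.nil, by ext x; simp⟩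
      · intro x
        refine ⟨{v}, ⟨Finset.mem_singleton_self _, by simp [hv x]⟩, ?_⟩
        rintro A ⟨hA, -⟩
        rwa [Finset.mem_singleton] at hA
      · simp
    have hc2 : 2 ≤ Fintype.card V := by omega
    have hleaf2 := two_le_leafCount T hT hc2
    have hLdef : leafCount T = ({w : V | (T.neighborSet w).ncard = 1}).ncard := rfl
    have hLne : ({w : V | (T.neighborSet w).ncard = 1}).Nonempty := by
      apply Set.nonempty_of_ncard_ne_zero
      omega
    obtain ⟨v, hvmem⟩ := hLne
    have hv : (T.neighborSet v).ncard = 1 := hvmem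
    obtain ⟨u, hu⟩ := Set.ncard_eq_one.mp hv
    have hadj : T.Adj v u := by
      have : u ∈ T.neighborSet v := by rw [hu]; exact rfl
      exact this
    have hune : u ≠ v := hadj.ne'
    by_cases hcard2 : Fintype.card V = 2
    · -- exactly two vertices
      have huniv : ∀ x : V, x = u ∨ x = v := by
        intro x
        have hs : ({u, v} : Finset V) = Finset.univ := by
          apply Finset.eq_univ_of_card
          rw [Finset.card_insert_of_notMem (by simpa using hune), Finset.card_singleton, hcard2]
        have : x ∈ ({u, v} : Finset V) := hs ▸ Finset.mem_univ x
        simpa using this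
      refine ⟨{(Set.univ : Set V)}, ⟨?_, ?_⟩, ?_⟩
      · intro A hA
        rw [Finset.mem_singleton] at hA
        subst hA
        refine ⟨u, v, SimpleGraph.Walk.cons hadj.symm SimpleGraph.Walk.nil, ?_, ?_⟩
        · rw [SimpleGraph.Walk.cons_isPath_iff]
          exact ⟨SimpleGraph.Walk.IsPath.nil, by simpa using hune⟩
        · ext x
          simp only [Set.mem_setOf_eq, Set.mem_univ, iff_true]
          rcases huniv x with rfl | rfl <;> simp
      · intro x
        exact ⟨Set.univ, ⟨Finset.mem_singleton_self _, Set.mem_univ x⟩,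
          by rintro A ⟨hA, -⟩; rwa [Finset.mem_singleton] at hA⟩
      · simp
    · -- at least three vertices
      have hc3 : 3 ≤ Fintype.card V := by omega
      have hcardV' : Fintype.card {x : V // x ≠ v} = Fintype.card V - 1 := by
        rw [Fintype.card_subtype]
        rw [Finset.filter_ne', Finset.card_erase_of_mem (Finset.mem_univ v), Finset.card_univ]
      have htree' := delete_leaf_tree hT hv
      obtain ⟨S', hS', hcardS'⟩ :=
        ih (T.comap (Subtype.val : {x : V // x ≠ v} → V)) (by omega) htree'
      have hvnotf : ∀ A : Set {x : V // x ≠ v}, v ∉ Subtype.val '' A := by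
        rintro A ⟨z, -, hz⟩; exact z.prop hz
      have hmemf : ∀ (x : V) (hx : x ≠ v) (A : Set {x : V // x ≠ v}),
          x ∈ Subtype.val '' A ↔ (⟨x, hx⟩ : {x : V // x ≠ v}) ∈ A := by
        intro x hx A
        constructor
        · rintro ⟨z, hz, rfl⟩
          have hz' : (⟨z.val, hx⟩ : {x : V // x ≠ v}) = z := Subtype.ext rfl
          rwa [hz']
        · intro h; exact ⟨⟨x, hx⟩, h, rfl⟩
      have hpath_lift : ∀ B ∈ S', ∃ (a b : V) (p : T.Walk a b), p.IsPath ∧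
          {x | x ∈ p.support} = Subtype.val '' B := by
        intro B hB
        obtain ⟨a, b, p, hp, hsup⟩ := hS'.1 B hB
        refine ⟨a.val, b.val, p.map liftHom,
          SimpleGraph.Walk.map_isPath_of_injective liftHom_inj hp, ?_⟩
        ext x
        erw [SimpleGraph.Walk.support_map]
        simp only [Set.mem_setOf_eq, SimpleGraph.Walk.support_map, List.mem_map, liftHom_coe]
        constructor
        · rintro ⟨y, hy, rfl⟩
          exact ⟨y, by rw [← hsup]; exact hy, rfl⟩
        · rintro ⟨y, hy, rfl⟩
          rw [← hsup] at hy
          exact ⟨y, hy, rfl⟩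
      -- leaf counting
      have himgL : leafCount (T.comap (Subtype.val : {x : V // x ≠ v} → V)) =
          (Subtype.val '' {w : {x : V // x ≠ v} |
            ((T.comap (Subtype.val : {x : V // x ≠ v} → V)).neighborSet w).ncard = 1}).ncard :=
        (Set.ncard_image_of_injective _ Subtype.val_injective).symm
      have hncardL : ({w : V | (T.neighborSet w).ncard = 1} \ {v}).ncard = leafCount T - 1 := by
        rw [Set.ncard_diff_singleton_of_mem hvmem, ← hLdef]
      by_cases hu' : ((T.comap (Subtype.val : {x : V // x ≠ v} → V)).neighborSet ⟨u, hune⟩).ncard = 1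
      · -- subcase A : u is a leaf of the reduced tree; extend its path by v
        have hl'le : leafCount (T.comap (Subtype.val : {x : V // x ≠ v} → V)) ≤ leafCount T := by
          rw [himgL]
          have hsub : Subtype.val '' {w : {x : V // x ≠ v} |
              ((T.comap (Subtype.val : {x : V // x ≠ v} → V)).neighborSet w).ncard = 1}
              ⊆ ({w : V | (T.neighborSet w).ncard = 1} \ {v}) ∪ {u} := by
            rintro x ⟨w, hw, rfl⟩
            by_cases hwu : w.val = u
            · right; exact hwu
            · left; exact ⟨leaf_transfer hu w hwu hw, w.prop⟩
          calc _ ≤ (({w : V | (T.neighborSet w).ncard = 1} \ {v}) ∪ {u}).ncard :=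
                Set.ncard_le_ncard hsub (Set.toFinite _)
            _ ≤ ({w : V | (T.neighborSet w).ncard = 1} \ {v}).ncard + ({u} : Set V).ncard :=
                Set.ncard_union_le _ _
            _ = (leafCount T - 1) + 1 := by rw [hncardL, Set.ncard_singleton]
            _ ≤ leafCount T := by omega
        obtain ⟨B, ⟨hBmem, hBu⟩, hBuniq⟩ := hS'.2 ⟨u, hune⟩
        obtain ⟨a, b, p, hp, hsup⟩ := hS'.1 B hBmem
        have humem : (⟨u, hune⟩ : {x : V // x ≠ v}) ∈ p.support := by
          rw [← hsup] at hBu; exact hBu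
        obtain ⟨z, q, hq, hsupq⟩ : ∃ (z : {x : V // x ≠ v})
            (q : (T.comap (Subtype.val : {x : V // x ≠ v} → V)).Walk ⟨u, hune⟩ z),
            q.IsPath ∧ {x | x ∈ q.support} = B := by
          rcases endpoint_of_ncard_one p hp humem hu' with h | h
          · exact h ▸ ⟨b, p, hp, hsup⟩
          · refine h ▸ ⟨a, p.reverse, hp.reverse, ?_⟩
            ext x
            simp only [Set.mem_setOf_eq, SimpleGraph.Walk.support_reverse, List.mem_reverse]
            rw [← hsup]; rfl
        have hqT := SimpleGraph.Walk.map_isPath_of_injective liftHom_inj hq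
        have hvq : v ∉ (q.map liftHom).support := by
          rw [SimpleGraph.Walk.support_map]
          intro hmem
          rw [List.mem_map] at hmem
          obtain ⟨y, -, hy⟩ := hmem
          exact y.prop hy
        have hr : (SimpleGraph.Walk.cons hadj (q.map liftHom)).IsPath := by
          exact (SimpleGraph.Walk.cons_isPath_iff _ _).mpr ⟨hqT, hvq⟩
        have hrsup : {x | x ∈ (SimpleGraph.Walk.cons hadj (q.map liftHom)).support}
            = insert v (Subtype.val '' B) := by
          ext x
          erw [SimpleGraph.Walk.support_cons, SimpleGraph.Walk.support_map]
          simp only [Set.mem_setOf_eq, SimpleGraph.Walk.support_cons, List.mem_cons,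
            SimpleGraph.Walk.support_map, List.mem_map, liftHom_coe, Set.mem_insert_iff]
          constructor
          · rintro (rfl | ⟨y, hy, rfl⟩)
            · left; rfl
            · right
              refine ⟨y, ?_, rfl⟩
              rw [← hsupq]; exact hy
          · rintro (rfl | ⟨y, hy, rfl⟩)
            · left; rfl
            · right
              refine ⟨y, ?_, rfl⟩
              rw [← hsupq] at hy; exact hy
        refine ⟨insert (insert v (Subtype.val '' B))
          ((S'.erase B).image (fun A => Subtype.val '' A)), ⟨?_, ?_⟩, ?_⟩
        · intro A hA
          rw [Finset.mem_insert] at hA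
          rcases hA with rfl | hA
          · exact ⟨v, z.val, _, hr, hrsup⟩
          · rw [Finset.mem_image] at hA
            obtain ⟨B'', hB'', rfl⟩ := hA
            exact hpath_lift B'' (Finset.mem_of_mem_erase hB'')
        · intro x
          by_cases hx : x = v
          · subst hx
            refine ⟨insert x (Subtype.val '' B),
              ⟨Finset.mem_insert_self _ _, Set.mem_insert _ _⟩, ?_⟩
            rintro A ⟨hA, hvA⟩
            rw [Finset.mem_insert] at hA
            rcases hA with rfl | hA
            · rfl
            · rw [Finset.mem_image] at hA
              obtain ⟨B'', -, rfl⟩ := hA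
              exact absurd hvA (hvnotf _)
          · obtain ⟨B₀, ⟨hB₀mem, hxB₀⟩, hB₀uniq⟩ := hS'.2 ⟨x, hx⟩
            by_cases hB₀B : B₀ = B
            · subst hB₀B
              refine ⟨insert v (Subtype.val '' B₀), ⟨Finset.mem_insert_self _ _,
                Set.mem_insert_of_mem _ ((hmemf x hx B₀).mpr hxB₀)⟩, ?_⟩
              rintro A ⟨hA, hxA⟩
              rw [Finset.mem_insert] at hA
              rcases hA with rfl | hA
              · rfl
              · rw [Finset.mem_image] at hA
                obtain ⟨B'', hB''er, rfl⟩ := hA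
                have hBB : B'' = B₀ := hB₀uniq B''
                  ⟨Finset.mem_of_mem_erase hB''er, (hmemf x hx B'').mp hxA⟩
                exact absurd hBB (Finset.ne_of_mem_erase hB''er)
            · refine ⟨Subtype.val '' B₀, ⟨Finset.mem_insert_of_mem
                (Finset.mem_image_of_mem _ (Finset.mem_erase.mpr ⟨hB₀B, hB₀mem⟩)),
                (hmemf x hx B₀).mpr hxB₀⟩, ?_⟩
              rintro A ⟨hA, hxA⟩
              rw [Finset.mem_insert] at hA
              rcases hA with rfl | hA
              · rcases Set.mem_insert_iff.mp hxA with h | h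
                · exact absurd h hx
                · exact absurd (hB₀uniq B ⟨hBmem, (hmemf x hx B).mp h⟩).symm hB₀B
              · rw [Finset.mem_image] at hA
                obtain ⟨B'', hB''er, rfl⟩ := hA
                rw [hB₀uniq B'' ⟨Finset.mem_of_mem_erase hB''er, (hmemf x hx B'').mp hxA⟩]
        · -- cardinality
          have h1 : 1 ≤ S'.card := Finset.card_pos.mpr ⟨B, hBmem⟩
          have h2 : ((S'.erase B).image (fun A => Subtype.val '' A)).card ≤ S'.card - 1 :=
            le_trans Finset.card_image_le (le_of_eq (Finset.card_erase_of_mem hBmem))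
          have h3 := Finset.card_insert_le (insert v (Subtype.val '' B))
            ((S'.erase B).image (fun A => Subtype.val '' A))
          have h4 : max 2 (leafCount (T.comap (Subtype.val : {x : V // x ≠ v} → V)))
              ≤ leafCount T := by
            rw [← max_eq_right hleaf2]
            exact max_le_max le_rfl hl'le
          rw [max_eq_right hleaf2]
          omega
      · -- subcase B : u is not a leaf of the reduced tree; add {v} as its own path
        have hl'lt : leafCount (T.comap (Subtype.val : {x : V // x ≠ v} → V))
            ≤ leafCount T - 1 := by
          rw [himgL]
          have hsub : Subtype.val '' {w : {x : V // x ≠ v} |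
              ((T.comap (Subtype.val : {x : V // x ≠ v} → V)).neighborSet w).ncard = 1}
              ⊆ {w : V | (T.neighborSet w).ncard = 1} \ {v} := by
            rintro x ⟨w, hw, rfl⟩
            by_cases hwu : w.val = u
            · exfalso
              apply hu'
              have : w = (⟨u, hune⟩ : {x : V // x ≠ v}) := Subtype.ext hwu
              rwa [← this]
            · exact ⟨leaf_transfer hu w hwu hw, w.prop⟩
          calc _ ≤ ({w : V | (T.neighborSet w).ncard = 1} \ {v}).ncard :=
                Set.ncard_le_ncard hsub (Set.toFinite _)
            _ = leafCount T - 1 := hncardL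
        have hl'2 : 2 ≤ leafCount (T.comap (Subtype.val : {x : V // x ≠ v} → V)) :=
          two_le_leafCount _ htree' (by omega)
        refine ⟨insert ({v} : Set V) (S'.image (fun A => Subtype.val '' A)), ⟨?_, ?_⟩, ?_⟩
        · intro A hA
          rw [Finset.mem_insert] at hA
          rcases hA with rfl | hA
          · exact ⟨v, v, SimpleGraph.Walk.nil, SimpleGraph.Walk.IsPath.nil, by ext x; simp⟩
          · rw [Finset.mem_image] at hA
            obtain ⟨B'', hB'', rfl⟩ := hA
            exact hpath_lift B'' hB''
        · intro x
          by_cases hx : x = v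
          · subst hx
            refine ⟨{x}, ⟨Finset.mem_insert_self _ _, rfl⟩, ?_⟩
            rintro A ⟨hA, hvA⟩
            rw [Finset.mem_insert] at hA
            rcases hA with rfl | hA
            · rfl
            · rw [Finset.mem_image] at hA
              obtain ⟨B'', -, rfl⟩ := hA
              exact absurd hvA (hvnotf _)
          · obtain ⟨B₀, ⟨hB₀mem, hxB₀⟩, hB₀uniq⟩ := hS'.2 ⟨x, hx⟩
            refine ⟨Subtype.val '' B₀, ⟨Finset.mem_insert_of_mem
              (Finset.mem_image_of_mem _ hB₀mem), (hmemf x hx B₀).mpr hxB₀⟩, ?_⟩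
            rintro A ⟨hA, hxA⟩
            rw [Finset.mem_insert] at hA
            rcases hA with rfl | hA
            · exact absurd (Set.mem_singleton_iff.mp hxA) hx
            · rw [Finset.mem_image] at hA
              obtain ⟨B'', hB''mem, rfl⟩ := hA
              rw [hB₀uniq B'' ⟨hB''mem, (hmemf x hx B'').mp hxA⟩]
        · have h2 : (S'.image (fun A => Subtype.val '' A)).card ≤ S'.card :=
            Finset.card_image_le
          have h3 := Finset.card_insert_le ({v} : Set V)
            (S'.image (fun A => Subtype.val '' A))
          rw [max_eq_right hl'2] at hcardS'
          rw [max_eq_right hleaf2]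
          omega

theorem stmt_0 {V : Type} [Fintype V] (G : SimpleGraph V)
    (hconn : G.Connected) (hcard : 2 ≤ Fintype.card V) :
    pathCoverNumber G + 1 ≤ ml G := by
  classical
  obtain ⟨T₀, hT₀le, hT₀⟩ := exists_tree_le G.edgeSet.ncard G le_rfl hconn
  refine le_csInf ⟨leafCount T₀, T₀, hT₀le, hT₀, rfl⟩ ?_
  rintro k ⟨T, hle, hT, rfl⟩
  obtain ⟨S, hS, hcardS⟩ := cover_of_tree (Fintype.card V) T le_rfl hT
  have h2 : 2 ≤ leafCount T := two_le_leafCount T hT hcard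
  rw [max_eq_right h2] at hcardS
  have hinj : Function.Injective ⇑(SimpleGraph.Hom.ofLE hle) := by
    intro a b h
    simpa [SimpleGraph.Hom.coe_ofLE] using h
  have hSG : IsPathCover G S := by
    refine ⟨?_, hS.2⟩
    intro A hA
    obtain ⟨a, b, p, hp, hsup⟩ := hS.1 A hA
    refine ⟨a, b, p.map (SimpleGraph.Hom.ofLE hle),
      SimpleGraph.Walk.map_isPath_of_injective hinj hp, ?_⟩
    rw [← hsup]
    ext x
    simp [SimpleGraph.Walk.support_map, SimpleGraph.Hom.coe_ofLE]
  have hle' : pathCoverNumber G ≤ S.card := Nat.sInf_le ⟨S, hSG, rfl⟩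
  omega
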